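/- For every t > 0, every β > 0, and every ξ ∈ ℝ, the series of integrals ∑_{j≥0} ∫_0^∞ sin(xξ) L_j^{(−1)}(2tx) e^{−(2j+β)x} dx converges and equals the double series ∑_{m≥0} ∑_{j≥0} (m)_j (−2t)^m / ( j! ((2j+2m+β)² + ξ²)^{(m+1)/2} ) · sin( (m+1) arctan( ξ/(2j+2m+β) ) ), which converges absolutely. -/

import Mathlib

open Real MeasureTheory Polynomial
open Filter Topology Set Asymptotics

/-- Pochhammer symbol `(a)_k = a (a+1) ⋯ (a+k-1)`. -/
noncomputable def poch (a : ℝ) (k : ℕ) : ℝ := (ascPochhammer ℝ k).eval a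

/-- Laguerre polynomial of index `-1`:
`L_j^{(-1)}(y) = (1/j!) ∑_{m=0}^j (-1)^m (j choose m) (m)_{j-m} y^m`. -/
noncomputable def laguerre (j : ℕ) (y : ℝ) : ℝ :=
  (1 / (j.factorial : ℝ)) *
    ∑ m ∈ Finset.range (j + 1), (-1 : ℝ) ^ m * (j.choose m : ℝ) * poch m (j - m) * y ^ m

/-- General term of the double series, with parameter `β > 0`. -/
noncomputable def ITerm (t β ξ : ℝ) (m j : ℕ) : ℝ :=
  poch m j * (-2 * t) ^ m /
      ((j.factorial : ℝ) *
        (((2 * (j : ℝ) + 2 * (m : ℝ) + β) ^ 2 + ξ ^ 2) ^ (((m : ℝ) + 1) / 2))) *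
    Real.sin (((m : ℝ) + 1) * Real.arctan (ξ / (2 * (j : ℝ) + 2 * (m : ℝ) + β)))

lemma tendsto_pow_mul_exp_neg' (n : ℕ) {s : ℝ} (hs : 0 < s) :
    Tendsto (fun x : ℝ => x ^ n * Real.exp (-s * x)) atTop (𝓝 0) := by
  have h1 : Tendsto (fun x : ℝ => s * x) atTop atTop :=
    Tendsto.const_mul_atTop hs tendsto_id
  have h2 := (tendsto_pow_mul_exp_neg_atTop_nhds_zero n).comp h1
  have h3 : (fun x : ℝ => x ^ n * Real.exp (-s * x))
      = fun x : ℝ => s⁻¹ ^ n * ((s * x) ^ n * Real.exp (-(s * x))) := by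
    funext x
    have h : s⁻¹ ^ n * (s * x) ^ n = x ^ n := by
      rw [mul_pow, ← mul_assoc, ← mul_pow, inv_mul_cancel₀ hs.ne', one_pow, one_mul]
    rw [← mul_assoc, h, neg_mul]
  rw [h3]
  simpa using h2.const_mul (s⁻¹ ^ n)

lemma integrableOn_pow_mul_exp (n : ℕ) {s : ℝ} (hs : 0 < s) :
    IntegrableOn (fun x : ℝ => x ^ n * Real.exp (-s * x)) (Set.Ioi 0) := by
  apply integrable_of_isBigO_exp_neg (half_pos hs)
  · exact ((continuous_pow n).mul
      (Real.continuous_exp.comp (continuous_const.mul continuous_id))).continuousOn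
  · have ht : Tendsto (fun x : ℝ => (x ^ n * Real.exp (-s * x)) / Real.exp (-(s/2) * x))
        atTop (𝓝 0) := by
      have : (fun x : ℝ => (x ^ n * Real.exp (-s * x)) / Real.exp (-(s/2) * x))
          = fun x : ℝ => x ^ n * Real.exp (-(s/2) * x) := by
        funext x
        rw [mul_div_assoc, ← Real.exp_sub]
        congr 1
        ring
      rw [this]
      exact tendsto_pow_mul_exp_neg' n (half_pos hs)
    have := (isLittleO_iff_tendsto fun x hx =>
      absurd hx (Real.exp_ne_zero _)).mpr ht
    exact this.isBigO

lemma tendsto_cexp_moment (n : ℕ) {z : ℂ} (hz : 0 < z.re) :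
    Tendsto (fun x : ℝ => (x : ℂ) ^ n * Complex.exp (-z * x)) atTop (𝓝 0) := by
  rw [tendsto_zero_iff_norm_tendsto_zero]
  have h : ∀ᶠ x : ℝ in atTop, x ^ n * Real.exp (-z.re * x)
      = ‖(x : ℂ) ^ n * Complex.exp (-z * x)‖ := by
    filter_upwards [eventually_ge_atTop (0:ℝ)] with x hx
    rw [norm_mul, norm_pow, Complex.norm_real, Real.norm_of_nonneg hx,
      Complex.norm_exp]
    congr 2
    simp [Complex.mul_re]
  exact (tendsto_pow_mul_exp_neg' n hz).congr' h

lemma integrableOn_cexp_moment (n : ℕ) {z : ℂ} (hz : 0 < z.re) :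
    IntegrableOn (fun x : ℝ => (x : ℂ) ^ n * Complex.exp (-z * x)) (Set.Ioi 0) := by
  apply Integrable.mono' (integrableOn_pow_mul_exp n hz)
  · exact ((Complex.continuous_ofReal.pow n).mul
      (Complex.continuous_exp.comp
        (continuous_const.mul Complex.continuous_ofReal))).aestronglyMeasurable
  · filter_upwards [ae_restrict_mem measurableSet_Ioi] with x hx
    rw [norm_mul, norm_pow, Complex.norm_real, Real.norm_of_nonneg (le_of_lt hx),
      Complex.norm_exp]
    apply le_of_eq
    congr 2
    simp [Complex.mul_re]

lemma integral_cexp_moment {z : ℂ} (hz : 0 < z.re) : ∀ n : ℕ,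
    ∫ x in Set.Ioi (0:ℝ), (x : ℂ) ^ n * Complex.exp (-z * x)
      = (n.factorial : ℂ) / z ^ (n + 1) := by
  have hz0 : z ≠ 0 := fun h => by simp [h] at hz
  intro n
  induction n with
  | zero =>
    have hderiv : ∀ x ∈ Ici (0:ℝ), HasDerivAt (fun x : ℝ => -z⁻¹ * Complex.exp (-z * x))
        (Complex.exp (-z * x)) x := by
      intro x _
      have h1 := (((hasDerivAt_id (x:ℂ)).const_mul (-z)).cexp).const_mul (-z⁻¹)
      have h2 := h1.comp_ofReal
      simp only [id_eq, mul_one] at h2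
      convert h2 using 1
      field_simp
    have hint : IntegrableOn (fun x : ℝ => Complex.exp (-z * x)) (Ioi 0) := by
      have := integrableOn_cexp_moment 0 hz
      simpa using this
    have htend : Tendsto (fun x : ℝ => -z⁻¹ * Complex.exp (-z * x)) atTop (𝓝 0) := by
      have := (tendsto_cexp_moment 0 hz).const_mul (-z⁻¹)
      simpa using this
    have := integral_Ioi_of_hasDerivAt_of_tendsto' hderiv hint htend
    simp only [Complex.ofReal_zero, mul_zero, Complex.exp_zero, mul_one] at this
    rw [show (fun x : ℝ => (x:ℂ) ^ 0 * Complex.exp (-z * x))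
      = fun x : ℝ => Complex.exp (-z * x) by funext x; simp]
    rw [this]
    simp
  | succ n ih =>
    set c : ℂ := ((n:ℂ) + 1) * z⁻¹ with hc
    have hderiv : ∀ x ∈ Ici (0:ℝ), HasDerivAt
        (fun x : ℝ => -z⁻¹ * ((x:ℂ) ^ (n+1) * Complex.exp (-z * x)))
        ((x:ℂ) ^ (n+1) * Complex.exp (-z * x) - c * ((x:ℂ) ^ n * Complex.exp (-z * x))) x := by
      intro x _
      have h1 : HasDerivAt (fun w : ℂ => w ^ (n+1)) (((n:ℂ)+1) * (x:ℂ) ^ n) (x:ℂ) := by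
        simpa using hasDerivAt_pow (n+1) (x:ℂ)
      have h2 := ((hasDerivAt_id (x:ℂ)).const_mul (-z)).cexp
      have h3 := ((h1.mul h2).const_mul (-z⁻¹)).comp_ofReal
      simp only [id_eq, mul_one] at h3
      convert h3 using 1
      · funext y; rfl
      rw [hc]
      linear_combination (-((x:ℂ) ^ (n + 1) * Complex.exp (-z * x))) * inv_mul_cancel₀ hz0
    have hint1 := integrableOn_cexp_moment (n+1) hz
    have hint0 := integrableOn_cexp_moment n hz
    have hint : IntegrableOn (fun x : ℝ =>
        (x:ℂ) ^ (n+1) * Complex.exp (-z * x) - c * ((x:ℂ) ^ n * Complex.exp (-z * x)))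
        (Ioi 0) := hint1.sub (hint0.const_mul c)
    have htend : Tendsto (fun x : ℝ => -z⁻¹ * ((x:ℂ) ^ (n+1) * Complex.exp (-z * x)))
        atTop (𝓝 0) := by
      have := (tendsto_cexp_moment (n+1) hz).const_mul (-z⁻¹)
      simpa using this
    have key := integral_Ioi_of_hasDerivAt_of_tendsto' hderiv hint htend
    simp only [Complex.ofReal_zero, zero_pow (Nat.succ_ne_zero n), zero_mul, mul_zero,
      sub_zero, zero_sub, neg_neg, neg_zero] at key
    have hsplit : ∫ x in Ioi (0:ℝ),
        ((x:ℂ) ^ (n+1) * Complex.exp (-z * x) - c * ((x:ℂ) ^ n * Complex.exp (-z * x)))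
        = (∫ x in Ioi (0:ℝ), (x:ℂ) ^ (n+1) * Complex.exp (-z * x))
          - c * ∫ x in Ioi (0:ℝ), (x:ℂ) ^ n * Complex.exp (-z * x) := by
      rw [integral_sub hint1 (hint0.const_mul c), integral_const_mul]
    rw [hsplit] at key
    have : (∫ x in Ioi (0:ℝ), (x:ℂ) ^ (n+1) * Complex.exp (-z * x))
        = c * ((n.factorial : ℂ) / z ^ (n+1)) := by
      rw [← ih]
      exact sub_eq_zero.mp key
    rw [this, hc, Nat.factorial_succ]
    push_cast
    field_simp
    ring_nf
    try exact Or.inl trivial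

lemma ofReal_mul_im' (a : ℝ) (w : ℂ) : ((a:ℂ) * w).im = a * w.im := by
  simp [Complex.mul_im]

lemma sqrt_one_add_div_sq {s ξ : ℝ} (hs : 0 < s) :
    Real.sqrt (1 + (ξ / s) ^ 2) = Real.sqrt (s ^ 2 + ξ ^ 2) / s := by
  rw [eq_div_iff hs.ne']
  nth_rewrite 2 [← Real.sqrt_sq hs.le]
  rw [← Real.sqrt_mul (by positivity)]
  congr 1
  field_simp

lemma polar_decomp {s : ℝ} (hs : 0 < s) (ξ : ℝ) :
    (s : ℂ) - (ξ : ℂ) * Complex.I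
      = (Real.sqrt (s ^ 2 + ξ ^ 2) : ℂ)
          * Complex.exp ((-(Real.arctan (ξ / s)) : ℝ) * Complex.I) := by
  have hr : (0:ℝ) < Real.sqrt (s ^ 2 + ξ ^ 2) := Real.sqrt_pos.mpr (by positivity)
  have hcos : Real.sqrt (s ^ 2 + ξ ^ 2) * Real.cos (Real.arctan (ξ / s)) = s := by
    rw [Real.cos_arctan, sqrt_one_add_div_sq hs]
    field_simp
  have hsin : Real.sqrt (s ^ 2 + ξ ^ 2) * Real.sin (Real.arctan (ξ / s)) = ξ := by
    rw [Real.sin_arctan, sqrt_one_add_div_sq hs]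
    field_simp
  rw [show ((-(Real.arctan (ξ / s)) : ℝ) : ℂ) * Complex.I
      = (↑(-(Real.arctan (ξ / s))) : ℂ) * Complex.I from rfl]
  rw [Complex.exp_mul_I, ← Complex.ofReal_cos, ← Complex.ofReal_sin]
  rw [Real.cos_neg, Real.sin_neg]
  simp only [Complex.ext_iff, Complex.sub_re, Complex.sub_im, Complex.mul_re, Complex.mul_im,
    Complex.ofReal_re, Complex.ofReal_im, Complex.add_re, Complex.add_im, Complex.I_re,
    Complex.I_im, Complex.ofReal_neg, Complex.neg_re, Complex.neg_im]
  constructor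
  · simp only [mul_zero, mul_one, sub_zero, zero_mul, zero_sub, add_zero, zero_add]
    nlinarith [hcos]
  · simp only [mul_zero, mul_one, sub_zero, zero_mul, zero_sub, add_zero, zero_add]
    nlinarith [hsin]

lemma integral_sin_moment {s : ℝ} (hs : 0 < s) (ξ : ℝ) (m : ℕ) :
    ∫ x in Set.Ioi (0:ℝ), x ^ m * (Real.sin (x * ξ) * Real.exp (-s * x))
      = (m.factorial : ℝ) * Real.sin (((m:ℝ) + 1) * Real.arctan (ξ / s))
          / ((s ^ 2 + ξ ^ 2) ^ (((m:ℝ) + 1) / 2)) := by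
  set θ := Real.arctan (ξ / s) with hθ
  set r := Real.sqrt (s ^ 2 + ξ ^ 2) with hrdef
  have hr : (0:ℝ) < r := Real.sqrt_pos.mpr (by positivity)
  set z : ℂ := (s : ℂ) - (ξ : ℂ) * Complex.I with hzdef
  have hzre : 0 < z.re := by simp [hzdef]; exact hs
  have him : ∀ x : ℝ, x ^ m * (Real.sin (x * ξ) * Real.exp (-s * x))
      = ((x:ℂ) ^ m * Complex.exp (-z * x)).im := by
    intro x
    rw [← Complex.ofReal_pow, ofReal_mul_im', Complex.exp_im]
    have h1 : (-z * (x:ℂ)).re = -s * x := by simp [hzdef]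
    have h2 : (-z * (x:ℂ)).im = x * ξ := by simp [hzdef]; ring
    rw [h1, h2]
    ring
  have step1 : ∫ x in Set.Ioi (0:ℝ), x ^ m * (Real.sin (x * ξ) * Real.exp (-s * x))
      = ((m.factorial : ℂ) / z ^ (m + 1)).im := by
    have h := integral_im (μ := volume.restrict (Set.Ioi 0)) (integrableOn_cexp_moment m hzre)
    simp only [RCLike.im_to_complex] at h
    rw [← integral_cexp_moment hzre m, ← h]
    exact setIntegral_congr_fun measurableSet_Ioi fun x _ => him x
  rw [step1]
  have hzpow : z ^ (m + 1) = ((r ^ (m + 1) : ℝ) : ℂ)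
      * Complex.exp ((-(((m:ℝ) + 1) * θ) : ℝ) * Complex.I) := by
    rw [hzdef, polar_decomp hs ξ, ← hθ, ← hrdef, mul_pow, ← Complex.exp_nat_mul,
      Complex.ofReal_pow]
    congr 1
    push_cast
    ring
  have hkey : (m.factorial : ℂ) / z ^ (m + 1)
      = (((m.factorial : ℝ) / r ^ (m + 1) : ℝ) : ℂ)
          * Complex.exp (((((m:ℝ) + 1) * θ) : ℝ) * Complex.I) := by
    rw [hzpow, div_eq_iff (mul_ne_zero (by exact_mod_cast (pow_pos hr (m+1)).ne')
      (Complex.exp_ne_zero _))]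
    rw [mul_mul_mul_comm, ← Complex.exp_add, ← Complex.ofReal_mul,
      div_mul_cancel₀ _ (pow_pos hr (m+1)).ne']
    rw [show ((((m:ℝ) + 1) * θ : ℝ) : ℂ) * Complex.I
        + ((-(((m:ℝ) + 1) * θ) : ℝ) : ℂ) * Complex.I = 0 by push_cast; ring]
    simp
  rw [hkey, ofReal_mul_im', Complex.exp_ofReal_mul_I_im]
  have hrpow : r ^ (m + 1) = (s ^ 2 + ξ ^ 2) ^ (((m:ℝ) + 1) / 2) := by
    rw [hrdef, Real.sqrt_eq_rpow,
      ← Real.rpow_natCast ((s ^ 2 + ξ ^ 2) ^ ((1:ℝ)/2)) (m + 1),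
      ← Real.rpow_mul (by positivity)]
    congr 1
    push_cast
    ring
  rw [hrpow]
  ring


lemma poch_natCast (m k : ℕ) : poch (m : ℝ) k = (m.ascFactorial k : ℝ) := by
  rw [poch, ← ascPochhammer_eval_cast (S := ℝ) k m, ascPochhammer_nat_eq_ascFactorial]

lemma integrableOn_pow_sin_exp (m : ℕ) {s : ℝ} (hs : 0 < s) (ξ : ℝ) :
    IntegrableOn (fun x : ℝ => x ^ m * (Real.sin (x * ξ) * Real.exp (-s * x)))
      (Set.Ioi 0) := by
  apply Integrable.mono' (integrableOn_pow_mul_exp m hs)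
  · exact ((continuous_pow m).mul ((Real.continuous_sin.comp (continuous_id.mul
      continuous_const)).mul (Real.continuous_exp.comp
      (continuous_const.mul continuous_id)))).aestronglyMeasurable
  · filter_upwards [ae_restrict_mem measurableSet_Ioi] with x hx
    have hx0 : (0:ℝ) ≤ x := le_of_lt hx
    rw [Real.norm_eq_abs, abs_mul, abs_mul, abs_pow, abs_of_nonneg hx0,
      Real.abs_exp]
    have h2 : |Real.sin (x * ξ)| ≤ 1 := Real.abs_sin_le_one _
    calc x ^ m * (|Real.sin (x * ξ)| * Real.exp (-s * x))
        ≤ x ^ m * (1 * Real.exp (-s * x)) := by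
          apply mul_le_mul_of_nonneg_left _ (pow_nonneg hx0 m)
          exact mul_le_mul_of_nonneg_right h2 (Real.exp_pos _).le
      _ = x ^ m * Real.exp (-s * x) := by ring

lemma integral_laguerre (t β ξ : ℝ) (hβ : 0 < β) (j : ℕ) :
    (∫ x in Set.Ioi (0:ℝ),
        Real.sin (x * ξ) * laguerre j (2 * t * x) * Real.exp (-(2 * (j:ℝ) + β) * x))
      = ∑ m ∈ Finset.range (j + 1), ITerm t β ξ m (j - m) := by
  set s : ℝ := 2 * (j:ℝ) + β with hsdef
  have hs : 0 < s := by positivity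
  have h1 : ∀ x : ℝ, Real.sin (x * ξ) * laguerre j (2 * t * x) * Real.exp (-s * x)
      = ∑ m ∈ Finset.range (j + 1),
          (1 / (j.factorial : ℝ) * ((-1:ℝ) ^ m * (j.choose m : ℝ) * poch m (j - m))
              * (2 * t) ^ m)
            * (x ^ m * (Real.sin (x * ξ) * Real.exp (-s * x))) := by
    intro x
    rw [laguerre, Finset.mul_sum, Finset.mul_sum, Finset.sum_mul]
    refine Finset.sum_congr rfl fun m _ => ?_
    rw [mul_pow (2 * t) x]
    ring
  rw [show (fun x : ℝ => Real.sin (x * ξ) * laguerre j (2 * t * x)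
      * Real.exp (-(2 * (j:ℝ) + β) * x)) = fun x : ℝ => ∑ m ∈ Finset.range (j + 1),
          (1 / (j.factorial : ℝ) * ((-1:ℝ) ^ m * (j.choose m : ℝ) * poch m (j - m))
              * (2 * t) ^ m)
            * (x ^ m * (Real.sin (x * ξ) * Real.exp (-s * x))) from funext fun x => h1 x]
  rw [integral_finset_sum _ (fun m _ =>
    ((integrableOn_pow_sin_exp m hs ξ).const_mul _))]
  refine Finset.sum_congr rfl fun m hm => ?_
  rw [MeasureTheory.integral_const_mul, integral_sin_moment hs ξ m]
  have hmj : m ≤ j := Nat.lt_succ_iff.mp (Finset.mem_range.mp hm)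
  have hc : ((j - m : ℕ) : ℝ) = (j:ℝ) - (m:ℝ) := Nat.cast_sub hmj
  have harg : 2 * ((j - m : ℕ) : ℝ) + 2 * (m:ℝ) + β = s := by rw [hc]; ring
  rw [ITerm, harg]
  have hpow : (-2 * t) ^ m = (-1:ℝ) ^ m * (2 * t) ^ m := by
    rw [show (-2 * t : ℝ) = -(2 * t) by ring, neg_pow]
  have hfac : ((j.choose m : ℝ)) * (m.factorial : ℝ) * ((j - m).factorial : ℝ)
      = (j.factorial : ℝ) := by
    exact_mod_cast congrArg (Nat.cast : ℕ → ℝ) (Nat.choose_mul_factorial_mul_factorial hmj)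
  have hRpos : (0:ℝ) < (s ^ 2 + ξ ^ 2) ^ (((m:ℝ) + 1) / 2) :=
    Real.rpow_pos_of_pos (by positivity) _
  have hjfac : (j.factorial : ℝ) ≠ 0 := Nat.cast_ne_zero.mpr j.factorial_pos.ne'
  have hjmfac : ((j - m).factorial : ℝ) ≠ 0 := Nat.cast_ne_zero.mpr (j - m).factorial_pos.ne'
  rw [hpow]
  field_simp
  linear_combination (t^m * 2^m * poch (↑m) (j - m)
    * Real.sin (((m:ℝ)+1) * Real.arctan (ξ/s))) * hfac

lemma rpow_denom_ge {A ξ : ℝ} (hA : 0 < A) (m : ℕ) :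
    A ^ (m + 1) ≤ (A ^ 2 + ξ ^ 2) ^ (((m:ℝ) + 1) / 2) := by
  have h1 : (A ^ 2 : ℝ) ^ (((m:ℝ) + 1) / 2) = A ^ (m + 1) := by
    rw [← Real.rpow_natCast A 2, ← Real.rpow_mul hA.le,
      ← Real.rpow_natCast A (m + 1)]
    congr 1
    push_cast
    ring
  rw [← h1]
  apply Real.rpow_le_rpow (by positivity) (by nlinarith [sq_nonneg ξ]) (by positivity)

lemma ITerm_abs_le_frac (t β ξ : ℝ) (ht : 0 < t) (hβ : 0 < β) (m j : ℕ) :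
    |ITerm t β ξ m j| ≤ (m.ascFactorial j : ℝ) * (2 * t) ^ m
      / ((j.factorial : ℝ) * (2 * (j:ℝ) + 2 * (m:ℝ) + β) ^ (m + 1)) := by
  set A : ℝ := 2 * (j:ℝ) + 2 * (m:ℝ) + β with hAdef
  have hA : 0 < A := by positivity
  have hR : A ^ (m + 1) ≤ (A ^ 2 + ξ ^ 2) ^ (((m:ℝ) + 1) / 2) := rpow_denom_ge hA m
  have hRpos : (0:ℝ) < (A ^ 2 + ξ ^ 2) ^ (((m:ℝ) + 1) / 2) :=
    lt_of_lt_of_le (by positivity) hR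
  have hjf : (0:ℝ) < (j.factorial : ℝ) := by exact_mod_cast j.factorial_pos
  have habs_num : |poch (m:ℝ) j * (-2 * t) ^ m| = (m.ascFactorial j : ℝ) * (2 * t) ^ m := by
    rw [abs_mul, poch_natCast, abs_pow, Nat.abs_cast]
    congr 2
    rw [abs_of_nonpos (by linarith : (-2 * t : ℝ) ≤ 0)]
    ring
  calc |ITerm t β ξ m j|
      = |poch (m:ℝ) j * (-2 * t) ^ m| / |(j.factorial : ℝ) * ((A ^ 2 + ξ ^ 2) ^ (((m:ℝ) + 1) / 2))|
          * |Real.sin (((m:ℝ) + 1) * Real.arctan (ξ / A))| := by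
        rw [ITerm, abs_mul, abs_div]
    _ ≤ (m.ascFactorial j : ℝ) * (2 * t) ^ m / ((j.factorial : ℝ) * A ^ (m + 1)) * 1 := by
        apply mul_le_mul _ (Real.abs_sin_le_one _) (abs_nonneg _) (by positivity)
        rw [habs_num, abs_of_pos (by positivity)]
        gcongr
    _ = (m.ascFactorial j : ℝ) * (2 * t) ^ m / ((j.factorial : ℝ) * A ^ (m + 1)) := mul_one _

lemma ascFactorial_mul_factorial_le (n j : ℕ) :
    (n + 1).ascFactorial j * n.factorial ≤ j.factorial * (n + j + 1) ^ n := by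
  have h1 : (n + 1).ascFactorial j = j.factorial * (n + j).choose j :=
    Nat.ascFactorial_eq_factorial_mul_choose n j
  have h2 : (n + j).choose j = (n + j).choose n := by
    have h := Nat.choose_symm (Nat.le_add_left j n)
    rw [Nat.add_sub_cancel] at h
    exact h.symm
  have h3 : (n + j).choose n * n.factorial = (n + j).descFactorial n := by
    rw [Nat.descFactorial_eq_factorial_mul_choose, Nat.mul_comm]
  calc (n + 1).ascFactorial j * n.factorial
      = j.factorial * ((n + j).choose n * n.factorial) := by rw [h1, h2, Nat.mul_assoc]
    _ = j.factorial * (n + j).descFactorial n := by rw [h3]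
    _ ≤ j.factorial * (n + j) ^ n :=
        Nat.mul_le_mul_left _ (Nat.descFactorial_le_pow _ _)
    _ ≤ j.factorial * (n + j + 1) ^ n :=
        Nat.mul_le_mul_left _ (Nat.pow_le_pow_left (Nat.le_succ _) _)

lemma ITerm_abs_le (t β ξ : ℝ) (ht : 0 < t) (hβ : 0 < β) (m j : ℕ) :
    |ITerm t β ξ m j| ≤ ((if m = 0 then β⁻¹ else 0) + t ^ m / ((m - 1).factorial : ℝ))
      * (((j:ℝ) + 1) ^ 2)⁻¹ := by
  refine le_trans (ITerm_abs_le_frac t β ξ ht hβ m j) ?_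
  match m with
  | 0 =>
    simp only [if_pos rfl, pow_zero, Nat.zero_sub, Nat.factorial_zero, Nat.cast_one, div_one,
      Nat.cast_zero, mul_zero, mul_one, zero_add, pow_one]
    match j with
    | 0 =>
      norm_num
    | Nat.succ k =>
      rw [Nat.zero_ascFactorial]
      simp only [Nat.cast_zero, zero_mul, zero_div]
      positivity
  | Nat.succ n =>
    simp only [if_neg (Nat.succ_ne_zero n), zero_add, Nat.succ_sub_one]
    set A : ℝ := 2 * (j:ℝ) + 2 * ((n + 1 : ℕ):ℝ) + β with hAdef
    have hA2 : 2 * ((n:ℝ) + (j:ℝ) + 1) ≤ A := by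
      rw [hAdef]; push_cast; nlinarith
    have hA : 0 < A := by rw [hAdef]; positivity
    rw [show t ^ (n + 1) / ((n.factorial : ℝ)) * (((j:ℝ) + 1) ^ 2)⁻¹
        = t ^ (n + 1) / ((n.factorial : ℝ) * ((j:ℝ) + 1) ^ 2) by
      rw [← one_div, div_mul_div_comm, mul_one]]
    rw [div_le_div_iff₀ (by positivity) (by positivity)]
    have hkey : (((n + 1).ascFactorial j : ℝ)) * (n.factorial : ℝ)
        ≤ (j.factorial : ℝ) * ((n:ℝ) + (j:ℝ) + 1) ^ n := by
      have := ascFactorial_mul_factorial_le n j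
      calc (((n + 1).ascFactorial j : ℝ)) * (n.factorial : ℝ)
          = (((n + 1).ascFactorial j * n.factorial : ℕ) : ℝ) := by push_cast; ring
        _ ≤ ((j.factorial * (n + j + 1) ^ n : ℕ) : ℝ) := by exact_mod_cast this
        _ = (j.factorial : ℝ) * ((n:ℝ) + (j:ℝ) + 1) ^ n := by push_cast; ring
    calc ((n + 1).ascFactorial j : ℝ) * (2 * t) ^ (n + 1) * ((n.factorial : ℝ) * ((j:ℝ) + 1) ^ 2)
        = (((n + 1).ascFactorial j : ℝ) * (n.factorial : ℝ)) * ((j:ℝ) + 1) ^ 2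
            * (2 ^ (n + 1) * t ^ (n + 1)) := by rw [mul_pow]; ring
      _ ≤ ((j.factorial : ℝ) * ((n:ℝ) + (j:ℝ) + 1) ^ n) * (((n:ℝ) + (j:ℝ) + 1) ^ 2)
            * (2 ^ (n + 1) * t ^ (n + 1)) := by
          gcongr ?_ * ?_ * _
          · gcongr <;> linarith [Nat.cast_nonneg (α := ℝ) n]
      _ = ((j.factorial : ℝ) * (((n:ℝ) + (j:ℝ) + 1) ^ (n + 2) * 2 ^ (n + 1))) * t ^ (n + 1) := by
          ring
      _ ≤ ((j.factorial : ℝ) * (((n:ℝ) + (j:ℝ) + 1) ^ (n + 2) * 2 ^ (n + 2))) * t ^ (n + 1) := by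
          gcongr
          all_goals norm_num
      _ = t ^ (n + 1) * ((j.factorial : ℝ) * (2 * ((n:ℝ) + (j:ℝ) + 1)) ^ (n + 2)) := by
          rw [mul_pow]; ring
      _ ≤ t ^ (n + 1) * ((j.factorial : ℝ) * A ^ (n + 2)) := by
          gcongr

lemma majorant_summable {t β : ℝ} (ht : 0 < t) (hβ : 0 < β) :
    Summable (fun p : ℕ × ℕ =>
      ((if p.1 = 0 then β⁻¹ else 0) + t ^ p.1 / ((p.1 - 1).factorial : ℝ))
        * (((p.2:ℝ) + 1) ^ 2)⁻¹) := by
  have hf : Summable (fun m : ℕ =>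
      (if m = 0 then β⁻¹ else 0) + t ^ m / ((m - 1).factorial : ℝ)) := by
    apply Summable.add
    · exact summable_of_ne_finset_zero (s := {0}) (fun m hm => if_neg (by simpa using hm))
    · apply (summable_nat_add_iff 1).mp
      have h : (fun n : ℕ => t ^ (n + 1) / (((n + 1) - 1).factorial : ℝ))
          = fun n : ℕ => t * (t ^ n / (n.factorial : ℝ)) := by
        funext n; rw [Nat.add_sub_cancel, pow_succ]; ring
      rw [h]
      exact (Real.summable_pow_div_factorial t).mul_left t
  have hg : Summable (fun j : ℕ => (((j:ℝ) + 1) ^ 2)⁻¹) := by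
    have h := (summable_nat_add_iff (f := fun n : ℕ => 1 / (n:ℝ) ^ 2) 1).mpr
      (summable_one_div_nat_pow.mpr one_lt_two)
    apply h.congr
    intro j
    push_cast
    rw [one_div]
  exact hf.mul_of_nonneg hg
    (fun m => add_nonneg (by split <;> positivity) (by positivity))
    (fun j => by positivity)

lemma ITerm_summable_abs (t β ξ : ℝ) (ht : 0 < t) (hβ : 0 < β) :
    Summable (fun p : ℕ × ℕ => |ITerm t β ξ p.1 p.2|) :=
  Summable.of_nonneg_of_le (fun _ => abs_nonneg _)
    (fun p => ITerm_abs_le t β ξ ht hβ p.1 p.2) (majorant_summable ht hβ)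

/-- For `t > 0`, `β > 0` and `ξ ∈ ℝ`, the series of integrals
`∑_{j ≥ 0} ∫_0^∞ sin(xξ) L_j^{(-1)}(2tx) e^{-(2j+β)x} dx` converges and equals the
double series `∑_{m,j} (m)_j (-2t)^m / (j! ((2j+2m+β)² + ξ²)^{(m+1)/2})
· sin((m+1) arctan(ξ/(2j+2m+β)))`, which converges absolutely. -/
theorem stmt6 (t β ξ : ℝ) (ht : 0 < t) (hβ : 0 < β) :
    (Summable fun j : ℕ =>
        ∫ x in Set.Ioi (0 : ℝ),
          Real.sin (x * ξ) * laguerre j (2 * t * x) * Real.exp (-(2 * j + β) * x)) ∧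
    (Summable fun p : ℕ × ℕ => |ITerm t β ξ p.1 p.2|) ∧
    (∑' j : ℕ, ∫ x in Set.Ioi (0 : ℝ),
        Real.sin (x * ξ) * laguerre j (2 * t * x) * Real.exp (-(2 * j + β) * x)) =
      ∑' (m : ℕ) (j : ℕ), ITerm t β ξ m j := by
  have habs := ITerm_summable_abs t β ξ ht hβ
  have hIT : Summable (fun p : ℕ × ℕ => ITerm t β ξ p.1 p.2) := habs.of_abs
  set g : ℕ × ℕ → ℝ := fun p => if p.2 ≤ p.1 then ITerm t β ξ p.2 (p.1 - p.2) else 0 with hgdef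
  set F : ℕ × ℕ → ℕ × ℕ := fun q => (q.2 + q.1, q.1) with hFdef
  have hFinj : Function.Injective F := by
    intro q q' h
    rw [hFdef] at h
    simp only [Prod.mk.injEq] at h
    obtain ⟨h1, h2⟩ := h
    exact Prod.ext h2 (by omega)
  have hgF : (g ∘ F) = fun q : ℕ × ℕ => ITerm t β ξ q.1 q.2 := by
    funext q
    simp only [hgdef, hFdef, Function.comp_apply, Nat.le_add_left, if_pos, Nat.add_sub_cancel]
  have hg0 : ∀ p ∉ Set.range F, g p = 0 := by
    intro p hp
    rw [hgdef]
    by_cases h : p.2 ≤ p.1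
    · exfalso
      exact hp ⟨(p.2, p.1 - p.2), by simp [hFdef, Prod.ext_iff]; omega⟩
    · exact if_neg h
  have hgsum : Summable g := by
    rw [← hFinj.summable_iff hg0, hgF]
    exact hIT
  have hfiber : ∀ j : ℕ, HasSum (fun m => g (j, m))
      (∑ m ∈ Finset.range (j + 1), ITerm t β ξ m (j - m)) := by
    intro j
    have h1 : HasSum (fun m => g (j, m)) (∑ m ∈ Finset.range (j + 1), g (j, m)) := by
      apply hasSum_sum_of_ne_finset_zero
      intro m hm
      rw [hgdef]
      exact if_neg (by simp at hm ⊢; omega)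
    have h2 : (∑ m ∈ Finset.range (j + 1), g (j, m))
        = ∑ m ∈ Finset.range (j + 1), ITerm t β ξ m (j - m) := by
      refine Finset.sum_congr rfl fun m hm => ?_
      rw [hgdef]
      exact if_pos (by simp at hm; omega)
    rwa [h2] at h1
  have houter : HasSum (fun j : ℕ => ∑ m ∈ Finset.range (j + 1), ITerm t β ξ m (j - m))
      (∑' p, g p) := hgsum.hasSum.prod_fiberwise hfiber
  have hval : ∀ j : ℕ, (∫ x in Set.Ioi (0 : ℝ),
      Real.sin (x * ξ) * laguerre j (2 * t * x) * Real.exp (-(2 * j + β) * x))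
      = ∑ m ∈ Finset.range (j + 1), ITerm t β ξ m (j - m) := fun j =>
    integral_laguerre t β ξ hβ j
  refine ⟨?_, habs, ?_⟩
  · exact (Summable.congr ⟨_, houter⟩ fun j => (hval j).symm)
  · calc (∑' j : ℕ, ∫ x in Set.Ioi (0 : ℝ),
        Real.sin (x * ξ) * laguerre j (2 * t * x) * Real.exp (-(2 * j + β) * x))
        = ∑' j : ℕ, ∑ m ∈ Finset.range (j + 1), ITerm t β ξ m (j - m) := tsum_congr hval
      _ = ∑' p, g p := houter.tsum_eq
      _ = ∑' q : ℕ × ℕ, ITerm t β ξ q.1 q.2 := by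
          exact ((hFinj.tsum_eq (Function.support_subset_iff'.mpr hg0)).symm.trans
            (tsum_congr fun q => congrFun hgF q))
      _ = ∑' (m : ℕ) (j : ℕ), ITerm t β ξ m j := Summable.tsum_prod' hIT fun m => hIT.prod_factor m
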